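/- Let P, A, 𝔄 be as in the standing conventions. If 𝔄 (a poset ideal of Hom(P,A)) has a unique maximal element, then there exist subsets B_i ⊆ A_i such that 𝔄 = Hom(P, B_1,...,B_m), the set of all isotone maps f : P → [n] with f(p_i) ∈ B_i for all i. -/

import Mathlib

/-- if the poset ideal `𝔄` of `Hom(P,A)` has a unique maximal
element, then there exist subsets `Bᵢ ⊆ Aᵢ` such that `𝔄` is the set of all
isotone maps `f` with `f(pᵢ) ∈ Bᵢ` for all `i`. -/
theorem stmt12 (m n : ℕ) (r : Fin m → Fin m → Prop)
    (hrefl : ∀ i, r i i) (htrans : ∀ i j k, r i j → r j k → r i k)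
    (hcompat : ∀ i j, r i j → i ≤ j)
    (A : Fin m → Finset (Fin n)) (hA : ∀ i, (A i).Nonempty)
    (𝔄 : Set (Fin m → Fin n)) (h𝔄ne : 𝔄.Nonempty)
    (hsub : ∀ f ∈ 𝔄, (∀ i, f i ∈ A i) ∧ (∀ i j, r i j → f i ≤ f j))
    (hdown : ∀ f ∈ 𝔄, ∀ g : Fin m → Fin n, (∀ i, g i ∈ A i) →
      (∀ i j, r i j → g i ≤ g j) → (∀ i, g i ≤ f i) → g ∈ 𝔄)
    (huniq : ∃! g, g ∈ 𝔄 ∧ ∀ f ∈ 𝔄, (∀ i, g i ≤ f i) → f = g) :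
    ∃ B : Fin m → Finset (Fin n), (∀ i, B i ⊆ A i) ∧
      𝔄 = {f : Fin m → Fin n |
        (∀ i, f i ∈ B i) ∧ ∀ i j, r i j → f i ≤ f j} := by
  classical
  obtain ⟨g, ⟨hg𝔄, hgmax⟩, hguniq⟩ := huniq
  -- every element of 𝔄 is ≤ g
  have key : ∀ f ∈ 𝔄, ∀ i, f i ≤ g i := by
    intro f hf
    set S : Finset (Fin m → Fin n) :=
      Finset.univ.filter (fun h => h ∈ 𝔄 ∧ ∀ i, f i ≤ h i) with hS
    have hfS : f ∈ S := by
      simp [hS, hf]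
    obtain ⟨a, haS, hamax'⟩ := Finset.exists_maximal (s := S) ⟨f, hfS⟩
    have hamax : ∀ x ∈ S, ¬ a < x := fun x hx hlt =>
      lt_irrefl a (lt_of_lt_of_le hlt (hamax' hx hlt.le))
    have ha : a ∈ 𝔄 ∧ ∀ i, f i ≤ a i := by
      simpa [hS] using haS
    have hag : a = g := by
      apply hguniq
      refine ⟨ha.1, fun f' hf' hle => ?_⟩
      have hf'S : f' ∈ S := by
        simp only [hS, Finset.mem_filter, Finset.mem_univ, true_and]
        exact ⟨hf', fun i => le_trans (ha.2 i) (hle i)⟩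
      have hale : a ≤ f' := hle
      rcases eq_or_lt_of_le hale with h | h
      · exact h.symm
      · exact absurd h (hamax f' hf'S)
    intro i
    exact hag ▸ ha.2 i
  refine ⟨fun i => (A i).filter (fun x => x ≤ g i), fun i => Finset.filter_subset _ _, ?_⟩
  ext f
  simp only [Set.mem_setOf_eq, Finset.mem_filter]
  constructor
  · intro hf
    exact ⟨fun i => ⟨(hsub f hf).1 i, key f hf i⟩, (hsub f hf).2⟩
  · rintro ⟨hB, hiso⟩
    exact hdown g hg𝔄 f (fun i => (hB i).1) hiso (fun i => (hB i).2)
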